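/- arXiv:0903.0726 — 2 statements merged into one kernel-verified Lean document; each statement's English description precedes it below -/
import Mathlib

section
/- (Proposition A.1) Let {V_i} be a sequence of random variables such that, for some function h, h(V_1, …, V_n) converges in distribution as n → ∞ to a random variable Ξ with distribution function G. If {U_n} is a sequence of random variables such that P{U_n − h(V_1, …, V_n) ≤ s | V_1, …, V_n} → F(s) almost surely for all s ∈ ℝ, where F is a continuous distribution function, then P(U_n ≤ t) → (G * F)(t) for all t ∈ ℝ, where * denotes convolution, i.e., (G * F)(t) = ∫ F(t − x) dG(x). -/
open MeasureTheory Filter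

section AuxStmt9
open Set



lemma aux_cell (x : ℕ → ℝ) : ∀ (k : ℕ) (y : ℝ), x 0 < y → y ≤ x k →
    ∃ j < k, x j < y ∧ y ≤ x (j + 1) := by
  intro k
  induction k with
  | zero => intro y h1 h2; exact absurd (h1.trans_le h2) (lt_irrefl _)
  | succ k ih =>
    intro y h1 h2
    by_cases h : y ≤ x k
    · obtain ⟨j, hj, hj2⟩ := ih y h1 h
      exact ⟨j, hj.trans (Nat.lt_succ_self k), hj2⟩
    · exact ⟨k, Nat.lt_succ_self k, not_le.mp h, h2⟩

lemma aux_split (ν : Measure ℝ) (f : ℝ → ℝ) (hf : Integrable f ν) (x : ℕ → ℝ)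
    (hx : Monotone x) : ∀ k : ℕ, ∫ y in Iic (x k), f y ∂ν =
      (∫ y in Iic (x 0), f y ∂ν) +
        ∑ j ∈ Finset.range k, ∫ y in Ioc (x j) (x (j + 1)), f y ∂ν := by
  intro k
  induction k with
  | zero => simp
  | succ k ih =>
    rw [Finset.sum_range_succ, ← add_assoc, ← ih,
      ← setIntegral_union (Iic_disjoint_Ioc le_rfl) measurableSet_Ioc
        hf.integrableOn hf.integrableOn,
      Iic_union_Ioc_eq_Iic (hx (Nat.le_succ k))]


lemma aux_key {Ω : Type*} [MeasurableSpace Ω] (μ : Measure Ω) [IsProbabilityMeasure μ]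
    (V : ℕ → Ω → ℝ) (hV : ∀ i, Measurable (V i))
    (hfun : (n : ℕ) → (Fin n → ℝ) → ℝ) (hmeas : ∀ n, Measurable (hfun n))
    (U : ℕ → Ω → ℝ) (hU : ∀ n, Measurable (U n))
    (F : ℝ → ℝ) (hF0 : ∀ s, 0 ≤ F s) (hF1 : ∀ s, F s ≤ 1)
    (s : ℝ)
    (hcond : ∀ᵐ ω ∂μ,
      Tendsto (fun n =>
          (μ[Set.indicator {ω' | U n ω' - hfun n (fun i => V i ω') ≤ s} (fun _ => (1 : ℝ))
            | MeasurableSpace.comap (fun ω' (i : Fin n) => V i ω') inferInstance]) ω)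
        atTop (nhds (F s)))
    (A : ℕ → Set Ω)
    (hA : ∀ n, MeasurableSet[MeasurableSpace.comap (fun ω' (i : Fin n) => V i ω')
      inferInstance] (A n))
    (c : ℝ) (hAc : Tendsto (fun n => (μ (A n)).toReal) atTop (nhds c)) :
    Tendsto (fun n =>
        (μ (A n ∩ {ω' | U n ω' - hfun n (fun i => V i ω') ≤ s})).toReal) atTop
      (nhds (F s * c)) := by
  set m : ℕ → MeasurableSpace Ω := fun n =>
    MeasurableSpace.comap (fun ω' (i : Fin n) => V i ω') inferInstance with hm_def
  have hm : ∀ n, m n ≤ ‹MeasurableSpace Ω› := fun n =>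
    Measurable.comap_le (measurable_pi_lambda _ fun i => hV i)
  set B : ℕ → Set Ω := fun n => {ω' | U n ω' - hfun n (fun i => V i ω') ≤ s} with hB_def
  have hB : ∀ n, MeasurableSet (B n) := fun n =>
    measurableSet_le ((hU n).sub ((hmeas n).comp
      (measurable_pi_lambda _ fun i => hV i))) measurable_const
  set ind : ℕ → Ω → ℝ := fun n => (B n).indicator (fun _ => (1 : ℝ)) with hind_def
  have hind_int : ∀ n, Integrable (ind n) μ := fun n =>
    (integrable_const 1).indicator (hB n)
  set φ : ℕ → Ω → ℝ := fun n => μ[ind n | m n] with hφ_def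
  have hφ_int : ∀ n, Integrable (φ n) μ := fun n => integrable_condExp
  have hφ0 : ∀ n, 0 ≤ᵐ[μ] φ n := fun n =>
    condExp_nonneg (Eventually.of_forall (Set.indicator_nonneg (fun _ _ => zero_le_one)))
  have hφ1 : ∀ n, φ n ≤ᵐ[μ] fun _ => (1 : ℝ) := by
    intro n
    have h1 : ind n ≤ᵐ[μ] fun _ => (1 : ℝ) := by
      refine Eventually.of_forall fun ω => ?_
      by_cases h : ω ∈ B n <;> simp [hind_def, Set.indicator, h]
    calc φ n ≤ᵐ[μ] μ[(fun _ => (1 : ℝ)) | m n] :=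
          condExp_mono (hind_int n) (integrable_const 1) h1
      _ =ᵐ[μ] fun _ => (1 : ℝ) := by rw [condExp_const (hm n)]
  -- the integral of |φ n - F s| tends to 0
  have hzero : Tendsto (fun n => ∫ ω, |φ n ω - F s| ∂μ) atTop (nhds 0) := by
    have h0 : (0 : ℝ) = ∫ _ : Ω, (0 : ℝ) ∂μ := by simp
    rw [h0]
    refine tendsto_integral_of_dominated_convergence (fun _ => (1 : ℝ))
      (fun n => (((stronglyMeasurable_condExp.mono (hm n)).measurable.sub
        measurable_const).abs).aestronglyMeasurable) (integrable_const 1) ?_ ?_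
    · intro n
      filter_upwards [hφ0 n, hφ1 n] with ω h0' h1'
      rw [Real.norm_eq_abs, abs_abs, abs_le]
      constructor <;> [skip; skip] <;> simp only [Pi.zero_apply] at h0' h1' <;>
        have := hF0 s <;> have := hF1 s
      · linarith
      · linarith
    · filter_upwards [hcond] with ω hω
      have h2 := (hω.sub_const (F s)).abs
      simp only [sub_self, abs_zero] at h2
      exact h2
  -- identification of the set measure with an integral of φ
  have hkey : ∀ n, (μ (A n ∩ B n)).toReal = ∫ ω in A n, φ n ω ∂μ := by
    intro n
    rw [hφ_def, setIntegral_condExp (hm n) (hind_int n) (hA n), hind_def,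
      setIntegral_indicator (hB n), setIntegral_const]
    simp
    rfl
  have hdiff : Tendsto (fun n => (μ (A n ∩ B n)).toReal - F s * (μ (A n)).toReal)
      atTop (nhds 0) := by
    refine squeeze_zero_norm (fun n => ?_) hzero
    have hAn : MeasurableSet (A n) := hm n _ (hA n)
    have h1 : (μ (A n ∩ B n)).toReal - F s * (μ (A n)).toReal
        = ∫ ω in A n, (φ n ω - F s) ∂μ := by
      rw [integral_sub (hφ_int n).integrableOn (integrableOn_const
        (measure_ne_top μ _)), hkey n, setIntegral_const]
      simp [mul_comm]
      exact Or.inl rfl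
    rw [h1, Real.norm_eq_abs]
    calc |∫ ω in A n, (φ n ω - F s) ∂μ| ≤ ∫ ω in A n, |φ n ω - F s| ∂μ := by
          simpa [Real.norm_eq_abs] using
            norm_integral_le_integral_norm (μ := μ.restrict (A n)) (fun ω => φ n ω - F s)
      _ ≤ ∫ ω, |φ n ω - F s| ∂μ :=
          setIntegral_le_integral ((hφ_int n).sub (integrable_const _)).abs
            (Eventually.of_forall fun ω => abs_nonneg _)
  have : Tendsto (fun n => ((μ (A n ∩ B n)).toReal - F s * (μ (A n)).toReal)
      + F s * (μ (A n)).toReal) atTop (nhds (0 + F s * c)) :=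
    hdiff.add (hAc.const_mul (F s))
  simpa only [sub_add_cancel, zero_add] using this


lemma aux_grid (G : StieltjesFunction ℝ) (hG0 : Tendsto (G : ℝ → ℝ) atBot (nhds 0))
    (F : ℝ → ℝ) (hFmono : Monotone F) (hFcont : Continuous F)
    (hF0 : Tendsto F atBot (nhds 0)) (t ε : ℝ) (hε : 0 < ε) :
    ∃ (k : ℕ) (x : ℕ → ℝ), 0 < k ∧ StrictMono x ∧ (∀ j, ContinuousAt G (x j)) ∧
      G (x 0) ≤ ε ∧ F (t - x k) ≤ ε ∧ ∀ j < k, F (t - x j) - F (t - x (j + 1)) ≤ ε := by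
  obtain ⟨a0, ha0⟩ := eventually_atBot.mp (hG0.eventually_le_const hε)
  obtain ⟨c0, hc0⟩ := eventually_atBot.mp (hF0.eventually_le_const hε)
  set A : ℝ := a0 - 1 with hA_def
  set B : ℝ := max (t - c0) (A + 1) with hB_def
  have hAB : A < B := lt_of_lt_of_le (by linarith) (le_max_right _ _)
  set g : ℝ → ℝ := fun y => F (t - y) with hg_def
  have hgc : Continuous g := hFcont.comp (continuous_const.sub continuous_id)
  have hUC := (isCompact_Icc (a := A) (b := B + 1)).uniformContinuousOn_of_continuous
    hgc.continuousOn
  obtain ⟨δ, hδ, hδ'⟩ := Metric.uniformContinuousOn_iff.mp hUC ε hε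
  set m : ℝ := min (δ / 2) (1 / 2) with hm_def
  have hm : 0 < m := lt_min (by linarith) (by norm_num)
  obtain ⟨k, hk⟩ := exists_nat_gt ((B - A) / m)
  have hk0 : 0 < k := by
    have h1 : (0 : ℝ) < (B - A) / m := div_pos (by linarith) hm
    exact_mod_cast Nat.cast_pos.mp (h1.trans hk)
  set step : ℝ := (B - A) / k with hstep_def
  have hkR : (0 : ℝ) < (k : ℝ) := Nat.cast_pos.mpr hk0
  have hstep : 0 < step := div_pos (by linarith) hkR
  have hstep_m : step < m := by
    rw [hstep_def, div_lt_iff₀ hkR]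
    have := (div_lt_iff₀ hm).mp hk
    nlinarith
  set y : ℕ → ℝ := fun j => A + j * step with hy_def
  have hD : Dense {z : ℝ | ContinuousAt G z} := by
    have h1 := (G.mono.countable_not_continuousAt).dense_compl ℝ
    have h2 : {x : ℝ | ¬ContinuousAt G x}ᶜ = {z : ℝ | ContinuousAt G z} := by
      ext z; simp [mem_compl_iff]
    rwa [h2] at h1
  have hex : ∀ j : ℕ, ∃ z, ContinuousAt G z ∧ z ∈ Ioo (y j) (y j + step) := by
    intro j
    obtain ⟨z, hz1, hz2⟩ := hD.exists_mem_open isOpen_Ioo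
      (nonempty_Ioo.mpr (lt_add_of_pos_right _ hstep))
    exact ⟨z, hz1, hz2⟩
  choose x hx1 hx2 using hex
  have hy_succ : ∀ j : ℕ, y (j + 1) = y j + step := by
    intro j; simp only [hy_def]; push_cast; ring
  have hxlt : ∀ j, x j < x (j + 1) := by
    intro j
    have h1 := (hx2 j).2
    have h2 := (hx2 (j + 1)).1
    rw [hy_succ j] at h2
    linarith
  have hxmono : StrictMono x := strictMono_nat_of_lt_succ hxlt
  have hyk : y k = B := by
    simp only [hy_def, hstep_def]
    field_simp
    ring
  have hstep_half : step ≤ 1 / 2 := le_of_lt (lt_of_lt_of_le hstep_m (min_le_right _ _))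
  have hstep_δ : 2 * step < δ := by
    have := lt_of_lt_of_le hstep_m (min_le_left _ _); linarith
  refine ⟨k, x, hk0, hxmono, hx1, ?_, ?_, ?_⟩
  · -- G (x 0) ≤ ε
    have h1 := (hx2 0).2
    have h2 : y 0 = A := by simp [hy_def]
    exact ha0 _ (by rw [h2] at h1; linarith)
  · -- F (t - x k) ≤ ε
    have h1 := (hx2 k).1
    rw [hyk] at h1
    have h2 : t - x k ≤ c0 := by
      have : t - c0 ≤ B := le_max_left _ _
      linarith
    exact hc0 _ h2
  · -- oscillation
    intro j hj
    have hmemA : ∀ i : ℕ, i ≤ k → x i ∈ Icc A (B + 1) := by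
      intro i hi
      constructor
      · have h1 := (hx2 i).1
        have h2 : A ≤ y i := by
          simp only [hy_def]
          have : (0 : ℝ) ≤ (i : ℝ) * step := mul_nonneg (Nat.cast_nonneg i) hstep.le
          linarith
        linarith
      · have h1 := (hx2 i).2
        have h2 : y i + step ≤ B + 1 := by
          simp only [hy_def]
          have hik : (i : ℝ) ≤ (k : ℝ) := Nat.cast_le.mpr hi
          have : (i : ℝ) * step ≤ (k : ℝ) * step :=
            mul_le_mul_of_nonneg_right hik hstep.le
          have hks : (k : ℝ) * step = B - A := by
            rw [hstep_def]; field_simp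
          linarith
        linarith
    have hd : dist (x j) (x (j + 1)) < δ := by
      rw [Real.dist_eq, abs_sub_comm, abs_of_nonneg (by linarith [hxlt j] : (0:ℝ) ≤ x (j+1) - x j)]
      have h1 := (hx2 j).1
      have h2 := (hx2 (j + 1)).2
      rw [hy_succ j] at h2
      linarith
    have := hδ' (x j) (hmemA j hj.le) (x (j + 1)) (hmemA (j + 1) hj)  hd
    rw [Real.dist_eq] at this
    calc F (t - x j) - F (t - x (j + 1)) ≤ |g (x j) - g (x (j + 1))| := le_abs_self _
      _ ≤ ε := this.le


end AuxStmt9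

/-- **Proposition A.1.** Let `{V_i}` be random variables such that
`h(V_1, …, V_n)` converges in distribution to `Ξ` with distribution function `G`. If `{U_n}`
are random variables with `P{U_n − h(V_1, …, V_n) ≤ s | V_1, …, V_n} → F(s)` almost surely for
all `s ∈ ℝ`, where `F` is a continuous distribution function, then
`P(U_n ≤ t) → (G * F)(t) = ∫ F(t − x) dG(x)` for all `t ∈ ℝ`. -/
theorem stmt_9 {Ω : Type*} [MeasurableSpace Ω] (μ : Measure Ω) [IsProbabilityMeasure μ]
    (V : ℕ → Ω → ℝ) (hV : ∀ i, Measurable (V i))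
    (hfun : (n : ℕ) → (Fin n → ℝ) → ℝ) (hmeas : ∀ n, Measurable (hfun n))
    (U : ℕ → Ω → ℝ) (hU : ∀ n, Measurable (U n))
    -- `G` is the distribution function of the weak limit `Ξ` of `h(V_1, …, V_n)`
    (G : StieltjesFunction ℝ)
    (hG0 : Tendsto G atBot (nhds 0)) (hG1 : Tendsto G atTop (nhds 1))
    (hweak : ∀ s : ℝ, ContinuousAt G s →
      Tendsto (fun n => (μ {ω | hfun n (fun i => V i ω) ≤ s}).toReal) atTop (nhds (G s)))
    -- `F` is a continuous distribution function
    (F : ℝ → ℝ) (hFmono : Monotone F) (hFcont : Continuous F)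
    (hF0 : Tendsto F atBot (nhds 0)) (hF1 : Tendsto F atTop (nhds 1))
    -- conditional convergence: for all `s`, a.s.
    -- `P{U_n − h(V_1, …, V_n) ≤ s | V_1, …, V_n} → F(s)`
    (hcond : ∀ s : ℝ, ∀ᵐ ω ∂μ,
      Tendsto (fun n =>
          (μ[Set.indicator {ω' | U n ω' - hfun n (fun i => V i ω') ≤ s} (fun _ => (1 : ℝ))
            | MeasurableSpace.comap (fun ω' (i : Fin n) => V i ω') inferInstance]) ω)
        atTop (nhds (F s))) :
    ∀ t : ℝ, Tendsto (fun n => (μ {ω | U n ω ≤ t}).toReal) atTop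
      (nhds (∫ x, F (t - x) ∂G.measure)) := by
  open Set in
  intro t
  -- pointwise bounds on F and G
  have hF0' : ∀ s, 0 ≤ F s := fun s => le_of_tendsto hF0 (by
    filter_upwards [eventually_le_atBot s] with y hy using hFmono hy)
  have hF1' : ∀ s, F s ≤ 1 := fun s => ge_of_tendsto hF1 (by
    filter_upwards [eventually_ge_atTop s] with y hy using hFmono hy)
  have hG0' : ∀ y, 0 ≤ G y := fun y => le_of_tendsto hG0 (by
    filter_upwards [eventually_le_atBot y] with z hz using G.mono hz)
  have hG1' : ∀ y, G y ≤ 1 := fun y => ge_of_tendsto hG1 (by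
    filter_upwards [eventually_ge_atTop y] with z hz using G.mono hz)
  haveI hGP : IsProbabilityMeasure G.measure := G.isProbabilityMeasure hG0 hG1
  set I : ℝ := ∫ x, F (t - x) ∂G.measure with hI_def
  have hfInt : Integrable (fun y => F (t - y)) G.measure := by
    refine Integrable.mono' (integrable_const 1)
      ((hFcont.comp (continuous_const.sub continuous_id)).aestronglyMeasurable) ?_
    refine Eventually.of_forall fun y => ?_
    rw [Real.norm_eq_abs, abs_le]
    exact ⟨by linarith [hF0' (t - y)], hF1' _⟩
  rw [Metric.tendsto_nhds]
  intro ε hε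
  set ε6 : ℝ := ε / 6 with hε6_def
  have hε6 : 0 < ε6 := by positivity
  obtain ⟨k, x, hk0, hxmono, hxcont, hGx0, hFxk, hosc⟩ :=
    aux_grid G hG0 F hFmono hFcont hF0 t ε6 hε6
  -- notation
  set H : ℕ → Ω → ℝ := fun n ω => hfun n (fun i => V i ω) with hH_def
  have hHmeas : ∀ n, Measurable (H n) := fun n =>
    (hmeas n).comp (measurable_pi_lambda _ fun i => hV i)
  set B : ℝ → ℕ → Set Ω := fun s n => {ω' | U n ω' - hfun n (fun i => V i ω') ≤ s}
    with hB_def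
  set S : ℝ → ℕ → Set Ω := fun a n => {ω | hfun n (fun i => V i ω) ≤ a} with hS_def
  set E : ℕ → ℕ → Set Ω := fun j n =>
    {ω | x j < hfun n (fun i => V i ω) ∧ hfun n (fun i => V i ω) ≤ x (j + 1)} with hE_def
  have hS_mV : ∀ a n, MeasurableSet[MeasurableSpace.comap
      (fun ω' (i : Fin n) => V i ω') inferInstance] (S a n) :=
    fun a n => ⟨{v | hfun n v ≤ a}, measurableSet_le (hmeas n) measurable_const, rfl⟩
  have hE_mV : ∀ j n, MeasurableSet[MeasurableSpace.comap
      (fun ω' (i : Fin n) => V i ω') inferInstance] (E j n) :=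
    fun j n => ⟨{v | x j < hfun n v ∧ hfun n v ≤ x (j + 1)},
      (measurableSet_lt measurable_const (hmeas n)).inter
        (measurableSet_le (hmeas n) measurable_const), rfl⟩
  have hS_meas : ∀ a n, MeasurableSet (S a n) := fun a n =>
    measurableSet_le (hHmeas n) measurable_const
  have hE_meas : ∀ j n, MeasurableSet (E j n) := fun j n =>
    (measurableSet_lt measurable_const (hHmeas n)).inter
      (measurableSet_le (hHmeas n) measurable_const)
  have hB_meas : ∀ s n, MeasurableSet (B s n) := fun s n =>
    measurableSet_le ((hU n).sub (hHmeas n)) measurable_const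
  -- convergence of cell measures
  have hS_lim : ∀ j, Tendsto (fun n => (μ (S (x j) n)).toReal) atTop (nhds (G (x j))) :=
    fun j => hweak (x j) (hxcont j)
  have hE_lim : ∀ j, Tendsto (fun n => (μ (E j n)).toReal) atTop
      (nhds (G (x (j + 1)) - G (x j))) := by
    intro j
    have hsub : ∀ n, S (x j) n ⊆ S (x (j + 1)) n := fun n ω hω =>
      le_trans hω (hxmono (Nat.lt_succ_self j)).le
    have heq : ∀ n, E j n = S (x (j + 1)) n \ S (x j) n := by
      intro n; ext ω
      simp only [hE_def, hS_def, mem_setOf_eq, mem_diff, not_le]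
      tauto
    have htoReal : ∀ n, (μ (E j n)).toReal
        = (μ (S (x (j + 1)) n)).toReal - (μ (S (x j) n)).toReal := by
      intro n
      rw [heq n, measure_diff (hsub n) (hS_meas _ n).nullMeasurableSet (measure_ne_top μ _),
        ENNReal.toReal_sub_of_le (measure_mono (hsub n)) (measure_ne_top μ _)]
    simp only [htoReal]
    exact (hS_lim (j + 1)).sub (hS_lim j)
  -- the lower and upper sums
  set Lo : ℕ → ℝ := fun n =>
    ∑ j ∈ Finset.range k, (μ (E j n ∩ B (t - x (j + 1)) n)).toReal with hLo_def
  set Up : ℕ → ℝ := fun n => (μ (S (x 0) n)).toReal +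
    (∑ j ∈ Finset.range k, (μ (E j n ∩ B (t - x j) n)).toReal) +
    (μ (B (t - x k) n)).toReal with hUp_def
  set Slo : ℝ := ∑ j ∈ Finset.range k, F (t - x (j + 1)) * (G (x (j + 1)) - G (x j))
    with hSlo_def
  set Sup : ℝ := G (x 0) +
    (∑ j ∈ Finset.range k, F (t - x j) * (G (x (j + 1)) - G (x j))) + F (t - x k)
    with hSup_def
  -- limits of the sums
  have hLo_lim : Tendsto Lo atTop (nhds Slo) := by
    refine tendsto_finset_sum _ fun j _ => ?_
    exact aux_key μ V hV hfun hmeas U hU F hF0' hF1' (t - x (j + 1)) (hcond _)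
      (fun n => E j n) (fun n => hE_mV j n) _ (hE_lim j)
  have hUp_lim : Tendsto Up atTop (nhds Sup) := by
    refine Tendsto.add (Tendsto.add (hS_lim 0) (tendsto_finset_sum _ fun j _ => ?_)) ?_
    · exact aux_key μ V hV hfun hmeas U hU F hF0' hF1' (t - x j) (hcond _)
        (fun n => E j n) (fun n => hE_mV j n) _ (hE_lim j)
    · have h := aux_key μ V hV hfun hmeas U hU F hF0' hF1' (t - x k) (hcond _)
        (fun _ => Set.univ) (fun n => MeasurableSet.univ) 1
        (by simp [measure_univ])
      simpa only [Set.univ_inter, mul_one] using h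
  -- Lo n is a lower bound for the target
  have hLo_le : ∀ n, Lo n ≤ (μ {ω | U n ω ≤ t}).toReal := by
    intro n
    have hdisj : (↑(Finset.range k) : Set ℕ).PairwiseDisjoint
        (fun j => E j n ∩ B (t - x (j + 1)) n) := by
      intro i _ j _ hij
      have key : ∀ a b : ℕ, a < b → Disjoint (E a n) (E b n) := by
        intro a b hab
        rw [Set.disjoint_left]
        intro ω hωa hωb
        have h1 : x (a + 1) ≤ x b := hxmono.monotone hab
        exact absurd (lt_of_le_of_lt (hωa.2.trans h1) hωb.1) (lt_irrefl _)
      rcases lt_or_gt_of_ne hij with h | h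
      · exact ((key i j h).mono inter_subset_left inter_subset_left)
      · exact ((key j i h).symm.mono inter_subset_left inter_subset_left)
    have hmeas' : ∀ j ∈ Finset.range k, MeasurableSet (E j n ∩ B (t - x (j + 1)) n) :=
      fun j _ => (hE_meas j n).inter (hB_meas _ n)
    have h1 : Lo n = (μ (⋃ j ∈ Finset.range k, E j n ∩ B (t - x (j + 1)) n)).toReal := by
      rw [measure_biUnion_finset hdisj hmeas', ENNReal.toReal_sum
        (fun j _ => measure_ne_top μ _)]
    have h2 : (⋃ j ∈ Finset.range k, E j n ∩ B (t - x (j + 1)) n) ⊆ {ω | U n ω ≤ t} := by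
      intro ω hω
      simp only [mem_iUnion, Finset.mem_range] at hω
      obtain ⟨j, _, hωE, hωB⟩ := hω
      have h3 : U n ω - hfun n (fun i => V i ω) ≤ t - x (j + 1) := hωB
      have h4 : hfun n (fun i => V i ω) ≤ x (j + 1) := hωE.2
      simp only [mem_setOf_eq]
      linarith
    rw [h1]
    exact ENNReal.toReal_mono (measure_ne_top μ _) (measure_mono h2)
  -- Up n is an upper bound for the target
  have hUp_ge : ∀ n, (μ {ω | U n ω ≤ t}).toReal ≤ Up n := by
    intro n
    have hincl : {ω | U n ω ≤ t} ⊆ S (x 0) n ∪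
        ((⋃ j ∈ Finset.range k, E j n ∩ B (t - x j) n) ∪ B (t - x k) n) := by
      intro ω hω
      simp only [mem_setOf_eq] at hω
      by_cases h0 : hfun n (fun i => V i ω) ≤ x 0
      · exact Or.inl h0
      · refine Or.inr ?_
        by_cases hk' : hfun n (fun i => V i ω) ≤ x k
        · obtain ⟨j, hj, hj1, hj2⟩ := aux_cell x k _ (not_le.mp h0) hk'
          refine Or.inl ?_
          simp only [mem_iUnion, Finset.mem_range]
          exact ⟨j, hj, ⟨hj1, hj2⟩, by simp only [hB_def, mem_setOf_eq]; linarith⟩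
        · refine Or.inr ?_
          simp only [hB_def, mem_setOf_eq]
          have := not_le.mp hk'
          linarith
    have h2 : μ {ω | U n ω ≤ t} ≤ μ (S (x 0) n) +
        ((∑ j ∈ Finset.range k, μ (E j n ∩ B (t - x j) n)) + μ (B (t - x k) n)) := by
      calc μ {ω | U n ω ≤ t} ≤ μ (S (x 0) n ∪
            ((⋃ j ∈ Finset.range k, E j n ∩ B (t - x j) n) ∪ B (t - x k) n)) :=
            measure_mono hincl
        _ ≤ μ (S (x 0) n) +
            μ ((⋃ j ∈ Finset.range k, E j n ∩ B (t - x j) n) ∪ B (t - x k) n) :=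
            measure_union_le _ _
        _ ≤ μ (S (x 0) n) +
            (μ (⋃ j ∈ Finset.range k, E j n ∩ B (t - x j) n) + μ (B (t - x k) n)) :=
            add_le_add le_rfl (measure_union_le _ _)
        _ ≤ _ := by
            gcongr
            exact measure_biUnion_finset_le _ _
    have hne : μ (S (x 0) n) +
        ((∑ j ∈ Finset.range k, μ (E j n ∩ B (t - x j) n)) + μ (B (t - x k) n)) ≠ ⊤ := by
      refine ENNReal.add_ne_top.mpr ⟨measure_ne_top μ _, ENNReal.add_ne_top.mpr
        ⟨?_, measure_ne_top μ _⟩⟩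
      exact (ENNReal.sum_lt_top.mpr fun j _ => measure_lt_top μ _).ne
    calc (μ {ω | U n ω ≤ t}).toReal ≤ (μ (S (x 0) n) +
          ((∑ j ∈ Finset.range k, μ (E j n ∩ B (t - x j) n)) + μ (B (t - x k) n))).toReal :=
          ENNReal.toReal_mono hne h2
      _ = Up n := by
          rw [ENNReal.toReal_add (measure_ne_top μ _) (ENNReal.add_ne_top.mpr
            ⟨(ENNReal.sum_lt_top.mpr fun j _ => measure_lt_top μ _).ne, measure_ne_top μ _⟩),
            ENNReal.toReal_add (ENNReal.sum_lt_top.mpr fun j _ => measure_lt_top μ _).ne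
            (measure_ne_top μ _), ENNReal.toReal_sum (fun j _ => measure_ne_top μ _)]
          simp only [hUp_def]
          ring
  -- integral bounds
  have hIocG : ∀ j : ℕ, (G.measure (Ioc (x j) (x (j + 1)))).toReal
      = G (x (j + 1)) - G (x j) := by
    intro j
    rw [G.measure_Ioc, ENNReal.toReal_ofReal
      (sub_nonneg.mpr (G.mono (hxmono (Nat.lt_succ_self j)).le))]
  have hIic_ub : ∫ y in Iic (x 0), F (t - y) ∂G.measure ≤ G (x 0) := by
    calc ∫ y in Iic (x 0), F (t - y) ∂G.measure
        ≤ ∫ _ in Iic (x 0), (1 : ℝ) ∂G.measure :=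
          setIntegral_mono_on hfInt.integrableOn (integrable_const 1).integrableOn
            measurableSet_Iic (fun y _ => hF1' _)
      _ = G (x 0) := by
          rw [setIntegral_const, measureReal_def, G.measure_Iic hG0, smul_eq_mul, mul_one, sub_zero,
            ENNReal.toReal_ofReal (hG0' _)]
  have hIic_lb : (0 : ℝ) ≤ ∫ y in Iic (x 0), F (t - y) ∂G.measure :=
    setIntegral_nonneg measurableSet_Iic fun y _ => hF0' _
  have hIoc_bounds : ∀ j : ℕ,
      F (t - x (j + 1)) * (G (x (j + 1)) - G (x j)) ≤
        (∫ y in Ioc (x j) (x (j + 1)), F (t - y) ∂G.measure) ∧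
      (∫ y in Ioc (x j) (x (j + 1)), F (t - y) ∂G.measure) ≤
        F (t - x j) * (G (x (j + 1)) - G (x j)) := by
    intro j
    constructor
    · calc F (t - x (j + 1)) * (G (x (j + 1)) - G (x j))
          = ∫ _ in Ioc (x j) (x (j + 1)), F (t - x (j + 1)) ∂G.measure := by
            rw [setIntegral_const, measureReal_def, hIocG j, smul_eq_mul, mul_comm]
        _ ≤ ∫ y in Ioc (x j) (x (j + 1)), F (t - y) ∂G.measure :=
            setIntegral_mono_on (integrable_const _).integrableOn hfInt.integrableOn
              measurableSet_Ioc (fun y hy => hFmono (by linarith [hy.2]))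
    · calc ∫ y in Ioc (x j) (x (j + 1)), F (t - y) ∂G.measure
          ≤ ∫ _ in Ioc (x j) (x (j + 1)), F (t - x j) ∂G.measure :=
            setIntegral_mono_on hfInt.integrableOn (integrable_const _).integrableOn
              measurableSet_Ioc (fun y hy => hFmono (by linarith [hy.1]))
        _ = F (t - x j) * (G (x (j + 1)) - G (x j)) := by
            rw [setIntegral_const, measureReal_def, hIocG j, smul_eq_mul, mul_comm]
  have hIoi_ub : ∫ y in Ioi (x k), F (t - y) ∂G.measure ≤ F (t - x k) := by
    calc ∫ y in Ioi (x k), F (t - y) ∂G.measure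
        ≤ ∫ _ in Ioi (x k), F (t - x k) ∂G.measure :=
          setIntegral_mono_on hfInt.integrableOn (integrable_const _).integrableOn
            measurableSet_Ioi (fun y hy => hFmono (by
              simp only [mem_Ioi] at hy; linarith))
      _ = (G.measure (Ioi (x k))).toReal * F (t - x k) := by
          rw [setIntegral_const, measureReal_def, smul_eq_mul]
      _ ≤ 1 * F (t - x k) := by
          refine mul_le_mul_of_nonneg_right ?_ (hF0' _)
          have h1 : G.measure (Ioi (x k)) ≤ G.measure Set.univ := measure_mono (subset_univ _)
          have h2 := ENNReal.toReal_mono (measure_ne_top _ _) h1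
          simpa [measure_univ] using h2
      _ = F (t - x k) := one_mul _
  have hIoi_lb : (0 : ℝ) ≤ ∫ y in Ioi (x k), F (t - y) ∂G.measure :=
    setIntegral_nonneg measurableSet_Ioi fun y _ => hF0' _
  have hI_split : I = (∫ y in Iic (x 0), F (t - y) ∂G.measure) +
      (∑ j ∈ Finset.range k, ∫ y in Ioc (x j) (x (j + 1)), F (t - y) ∂G.measure) +
      ∫ y in Ioi (x k), F (t - y) ∂G.measure := by
    have h1 := integral_add_compl (measurableSet_Iic (a := x k)) hfInt
    rw [compl_Iic] at h1
    rw [hI_def, ← h1, aux_split G.measure _ hfInt x hxmono.monotone k]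
  -- comparison of sums with the integral
  have hSlo_le_I : Slo ≤ I := by
    rw [hI_split, hSlo_def]
    have hsum := Finset.sum_le_sum (fun j (_ : j ∈ Finset.range k) => (hIoc_bounds j).1)
    linarith
  have hI_le_Sup : I ≤ Sup := by
    rw [hI_split, hSup_def]
    have hsum := Finset.sum_le_sum (fun j (_ : j ∈ Finset.range k) => (hIoc_bounds j).2)
    linarith
  -- Sup - Slo is small
  have hSup_Slo : Sup - Slo ≤ 3 * ε6 := by
    have hdiff : (∑ j ∈ Finset.range k, F (t - x j) * (G (x (j + 1)) - G (x j))) -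
        (∑ j ∈ Finset.range k, F (t - x (j + 1)) * (G (x (j + 1)) - G (x j)))
        ≤ ε6 * (G (x k) - G (x 0)) := by
      rw [← Finset.sum_sub_distrib]
      have h1 : ∀ j ∈ Finset.range k,
          F (t - x j) * (G (x (j + 1)) - G (x j)) -
            F (t - x (j + 1)) * (G (x (j + 1)) - G (x j))
          ≤ ε6 * (G (x (j + 1)) - G (x j)) := by
        intro j hj
        rw [← sub_mul]
        exact mul_le_mul_of_nonneg_right (hosc j (Finset.mem_range.mp hj))
          (sub_nonneg.mpr (G.mono (hxmono (Nat.lt_succ_self j)).le))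
      calc _ ≤ ∑ j ∈ Finset.range k, ε6 * (G (x (j + 1)) - G (x j)) :=
            Finset.sum_le_sum h1
        _ = ε6 * (G (x k) - G (x 0)) := by
            rw [← Finset.mul_sum, Finset.sum_range_sub (fun j => G (x j))]
    have h2 : ε6 * (G (x k) - G (x 0)) ≤ ε6 * 1 := by
      refine mul_le_mul_of_nonneg_left ?_ hε6.le
      linarith [hG1' (x k), hG0' (x 0)]
    rw [hSup_def, hSlo_def]
    linarith
  -- final assembly
  have hev1 : ∀ᶠ n in atTop, Slo - ε6 < Lo n :=
    hLo_lim.eventually (eventually_gt_nhds (by linarith))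
  have hev2 : ∀ᶠ n in atTop, Up n < Sup + ε6 :=
    hUp_lim.eventually (eventually_lt_nhds (by linarith))
  filter_upwards [hev1, hev2] with n h1 h2
  rw [Real.dist_eq, abs_lt]
  have h3 := hLo_le n
  have h4 := hUp_ge n
  constructor
  · have : (μ {ω | U n ω ≤ t}).toReal > Slo - ε6 := lt_of_lt_of_le h1 h3
    have h5 : Slo ≥ I - 3 * ε6 := by linarith
    rw [hε6_def] at *
    linarith
  · have : (μ {ω | U n ω ≤ t}).toReal < Sup + ε6 := lt_of_le_of_lt h4 h2
    have h5 : Sup ≤ I + 3 * ε6 := by linarith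
    rw [hε6_def] at *
    linarith
end

section
/- Let g_1, …, g_n ∈ ℝ^r and suppose t ∈ ℝ^r satisfies 1 + t^T g_i > 0 for every i and Σ_{i=1}^n g_i / (1 + t^T g_i) = 0, and set p_i = n^{-1} (1 + t^T g_i)^{-1}. Then for any nonnegative weights q_1, …, q_n with Σ_{i=1}^n q_i = 1 and Σ_{i=1}^n q_i g_i = 0, one has Π_{i=1}^n q_i ≤ Π_{i=1}^n p_i. Consequently the empirical likelihood sup{Π q_i : q_i ≥ 0, Σ q_i = 1, Σ q_i g_i = 0} is attained at the weights p_i and equals Π_{i=1}^n n^{-1}(1 + t^T g_i)^{-1}. -/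
open Matrix

/-- Let `g_1, …, g_n ∈ ℝ^r` and suppose `t ∈ ℝ^r` satisfies `1 + tᵀ g_i > 0`
for every `i` and `Σ_i g_i / (1 + tᵀ g_i) = 0`, and set `p_i = n⁻¹ (1 + tᵀ g_i)⁻¹`. Then for any
nonnegative weights `q_i` with `Σ q_i = 1` and `Σ q_i g_i = 0` one has `Π q_i ≤ Π p_i`;
consequently the empirical likelihood `sup{Π q_i : q_i ≥ 0, Σ q_i = 1, Σ q_i g_i = 0}` is
attained at the weights `p_i` and equals `Π_i n⁻¹ (1 + tᵀ g_i)⁻¹`. -/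
theorem stmt_11 (n r : ℕ) (hn : 0 < n) (g : Fin n → Fin r → ℝ) (t : Fin r → ℝ)
    (hpos : ∀ i, 0 < 1 + t ⬝ᵥ g i)
    (hsol : ∑ i, (1 + t ⬝ᵥ g i)⁻¹ • g i = 0) :
    (∀ q : Fin n → ℝ, (∀ i, 0 ≤ q i) → ∑ i, q i = 1 → ∑ i, q i • g i = 0 →
        ∏ i, q i ≤ ∏ i, (n : ℝ)⁻¹ * (1 + t ⬝ᵥ g i)⁻¹) ∧
      IsGreatest
        {x : ℝ | ∃ q : Fin n → ℝ,
          (∀ i, 0 ≤ q i) ∧ ∑ i, q i = 1 ∧ ∑ i, q i • g i = 0 ∧ x = ∏ i, q i}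
        (∏ i, (n : ℝ)⁻¹ * (1 + t ⬝ᵥ g i)⁻¹) := by
  have hnR : (0 : ℝ) < n := by exact_mod_cast hn
  set a : Fin n → ℝ := fun i => 1 + t ⬝ᵥ g i with ha
  have hpos' : ∀ i, 0 < a i := hpos
  have hdothelp : ∀ c : Fin n → ℝ, ∑ i, c i • g i = 0 → ∑ i, c i * (t ⬝ᵥ g i) = 0 := by
    intro c hc
    have hz : ∀ j, ∑ i, c i * g i j = 0 := by
      intro j
      have := congrFun hc j
      simpa [Finset.sum_apply] using this
    simp only [dotProduct, Finset.mul_sum]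
    rw [Finset.sum_comm]
    have : ∀ j, ∑ i, c i * (t j * g i j) = t j * ∑ i, c i * g i j := by
      intro j; rw [Finset.mul_sum]; congr 1; ext i; ring
    simp [this, hz]
  have hdot : ∑ i, (a i)⁻¹ * (t ⬝ᵥ g i) = 0 := hdothelp _ hsol
  have hsuminv : ∑ i, (a i)⁻¹ = n := by
    have h1 : ∀ i, (a i)⁻¹ * (t ⬝ᵥ g i) = 1 - (a i)⁻¹ := by
      intro i
      have hne := (hpos' i).ne'
      field_simp
      simp [ha]
    have := hdot
    rw [Finset.sum_congr rfl (fun i _ => h1 i)] at this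
    rw [Finset.sum_sub_distrib] at this
    simp at this
    linarith
  -- the main inequality
  have main : ∀ q : Fin n → ℝ, (∀ i, 0 ≤ q i) → ∑ i, q i = 1 → ∑ i, q i • g i = 0 →
      ∏ i, q i ≤ ∏ i, (n : ℝ)⁻¹ * (a i)⁻¹ := by
    intro q hq hq1 hqg
    have hqa : ∑ i, q i * a i = 1 := by
      have hdq : ∑ i, q i * (t ⬝ᵥ g i) = 0 := hdothelp _ hqg
      have : ∑ i, q i * a i = ∑ i, q i + ∑ i, q i * (t ⬝ᵥ g i) := by
        rw [← Finset.sum_add_distrib]; congr 1; ext i; simp [ha]; ring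
      rw [this, hq1, hdq]; ring
    have hxnn : ∀ i, 0 ≤ q i * a i := fun i => mul_nonneg (hq i) (hpos' i).le
    have prodnn : 0 ≤ ∏ i, (q i * a i) := Finset.prod_nonneg fun i _ => hxnn i
    have amgm := Real.geom_mean_le_arith_mean_weighted Finset.univ
      (fun _ => (n : ℝ)⁻¹) (fun i => q i * a i)
      (fun i _ => by positivity)
      (by simp [Finset.card_univ]; field_simp)
      (fun i _ => hxnn i)
    rw [← Finset.mul_sum, hqa, mul_one] at amgm
    have h1 : (∏ i, (q i * a i)) ^ ((n:ℝ)⁻¹) ≤ (n:ℝ)⁻¹ := by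
      rw [← Real.finset_prod_rpow _ _ (fun i _ => hxnn i)]
      exact amgm
    have h2 := Real.rpow_le_rpow (Real.rpow_nonneg prodnn _) h1 (le_of_lt hnR)
    rw [← Real.rpow_mul prodnn, inv_mul_cancel₀ hnR.ne', Real.rpow_one,
      Real.rpow_natCast] at h2
    have key : ∏ i, q i = (∏ i, (q i * a i)) * ∏ i, (a i)⁻¹ := by
      rw [← Finset.prod_mul_distrib]
      congr 1; ext i
      rw [mul_assoc, mul_inv_cancel₀ (hpos' i).ne', mul_one]
    rw [key]
    have hsplit : ∏ i, (n : ℝ)⁻¹ * (a i)⁻¹ = ((n:ℝ)⁻¹)^n * ∏ i, (a i)⁻¹ := by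
      rw [Finset.prod_mul_distrib]; simp
    rw [hsplit]
    exact mul_le_mul_of_nonneg_right h2
      (Finset.prod_nonneg fun i _ => inv_nonneg.mpr (hpos' i).le)
  refine ⟨main, ?_, ?_⟩
  · refine ⟨fun i => (n : ℝ)⁻¹ * (a i)⁻¹,
      fun i => mul_nonneg (inv_nonneg.mpr hnR.le) (inv_nonneg.mpr (hpos' i).le), ?_, ?_, rfl⟩
    · rw [← Finset.mul_sum, hsuminv]; field_simp
    · have : ∑ i, ((n : ℝ)⁻¹ * (a i)⁻¹) • g i = (n : ℝ)⁻¹ • ∑ i, (a i)⁻¹ • g i := by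
        rw [Finset.smul_sum]; congr 1; ext i; rw [smul_smul]
      rw [this, hsol, smul_zero]
  · rintro x ⟨q, hq, hq1, hqg, rfl⟩
    exact main q hq hq1 hqg
end
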